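/- Covariant gates acquire only a control phase: Let G be a finite group, U_{0→i} the finite-group frame-change unitary, and U_S a unitary on H_S for some S ∈ R. Suppose there is a group homomorphism χ : G → ℂ with |χ(g)| = 1 for all g, such that U_R(g) U_S U_R(g)† = χ(g) U_S for all g ∈ G. Then U_{0→i} (1 ⊗ U_S) U_{0→i}† = V_0(χ) ⊗ 1_i ⊗ (⊗_{k∈R∖{S}} 1_k) ⊗ U_S, where V_0(χ) = ∑_{g∈G} χ(g) |g⟩⟨g|_0 is a diagonal unitary on the old-frame register; in particular the frame change introduces only a frame-dependent phase and creates no entanglement between the frame register and S. -/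

import Mathlib

open Matrix Finset

/-- The right-regular representation of a finite group `G` on `ℂ^G`:
`U_R(h)|g⟩ = |g h⁻¹⟩`. -/
def rightReg {G : Type*} [Group G] [Fintype G] [DecidableEq G] (h : G) :
    Matrix G G ℂ :=
  Matrix.of fun a b => if a = b * h⁻¹ then 1 else 0

/-- The rank-one projector `|g⟩⟨g|` on `ℂ^G`. -/
def ketbra {G : Type*} [Group G] [Fintype G] [DecidableEq G] (g : G) :
    Matrix G G ℂ :=
  Matrix.of fun a b => if a = g ∧ b = g then 1 else 0

/-- Tensor product of an operator on the factor `0`, an operator on the factor `i`,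
and an operator on the remaining registers `⊗_{k∈R} H_k`, as a matrix on
`H = H_0 ⊗ H_i ⊗ ⊗_{k∈R} H_k` indexed by `G × G × (R → G)`. -/
def tens3 {G : Type*} [Group G] [Fintype G] [DecidableEq G]
    {R : Type*} [Fintype R] [DecidableEq R]
    (P Q : Matrix G G ℂ) (T : Matrix (R → G) (R → G) ℂ) :
    Matrix (G × G × (R → G)) (G × G × (R → G)) ℂ :=
  Matrix.of fun a b => P a.1 b.1 * Q a.2.1 b.2.1 * T a.2.2 b.2.2

/-- The tensor product `⊗_{k∈R} M k` of one-site operators, as a matrix on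
`⊗_{k∈R} H_k` indexed by `R → G`. -/
def prodMat {G : Type*} [Group G] [Fintype G] [DecidableEq G]
    {R : Type*} [Fintype R] [DecidableEq R]
    (M : R → Matrix G G ℂ) : Matrix (R → G) (R → G) ℂ :=
  Matrix.of fun f f' => ∏ k : R, M k (f k) (f' k)

/-- The controlled part `W_i = ∑_{g∈G} |g⟩⟨g|_i ⊗ 1_0 ⊗ ⊗_{k∈R} U_R(g)_k`
of the finite-group frame-change unitary. -/
noncomputable def Wmap (G : Type*) [Group G] [Fintype G] [DecidableEq G]
    (R : Type*) [Fintype R] [DecidableEq R] :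
    Matrix (G × G × (R → G)) (G × G × (R → G)) ℂ :=
  ∑ g : G, tens3 (1 : Matrix G G ℂ) (ketbra g) (prodMat fun _ : R => rightReg g)

/-- `SWAP_{0,i}`: exchange of the tensor factors `0` and `i`. -/
def swap0i (G : Type*) [Group G] [Fintype G] [DecidableEq G]
    (R : Type*) [Fintype R] [DecidableEq R] :
    Matrix (G × G × (R → G)) (G × G × (R → G)) ℂ :=
  Matrix.of fun a b => if a.1 = b.2.1 ∧ a.2.1 = b.1 ∧ a.2.2 = b.2.2 then 1 else 0

/-- The frame-change operator `U_{0→i} = SWAP_{0,i} ∘ W_i`. -/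
noncomputable def frameChange (G : Type*) [Group G] [Fintype G] [DecidableEq G]
    (R : Type*) [Fintype R] [DecidableEq R] :
    Matrix (G × G × (R → G)) (G × G × (R → G)) ℂ :=
  swap0i G R * Wmap G R


/-- Embedding of a one-site operator `A` at site `S ∈ R` into `⊗_{k∈R} H_k`
(identity on every other site). -/
def embedAt {G : Type*} [Group G] [Fintype G] [DecidableEq G]
    {R : Type*} [Fintype R] [DecidableEq R]
    (S : R) (A : Matrix G G ℂ) : Matrix (R → G) (R → G) ℂ :=
  prodMat fun k => if k = S then A else 1

section AuxFC
variable {G : Type*} [Group G] [Fintype G] [DecidableEq G]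
variable {R : Type*} [Fintype R] [DecidableEq R]

lemma Vdiag (χ : G → ℂ) :
    (∑ g : G, χ g • ketbra g) = Matrix.diagonal χ := by
  ext a b
  simp only [Matrix.sum_apply, Matrix.smul_apply, ketbra, Matrix.of_apply,
    Matrix.diagonal_apply, smul_eq_mul, mul_ite, mul_one, mul_zero]
  rw [Finset.sum_eq_single a]
  · by_cases h : a = b <;> simp [h, eq_comm]
  · intro g _ hg; simp [Ne.symm hg]
  · simp

lemma Vunit (χ : G → ℂ) (hχabs : ∀ g : G, ‖χ g‖ = 1) :
    (∑ g : G, χ g • ketbra g)ᴴ * (∑ g : G, χ g • ketbra g) = 1 ∧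
    (∑ g : G, χ g • ketbra g) * (∑ g : G, χ g • ketbra g)ᴴ = 1 := by
  rw [Vdiag, Matrix.diagonal_conjTranspose, Matrix.diagonal_mul_diagonal,
    Matrix.diagonal_mul_diagonal]
  have h1 : ∀ g : G, (starRingEnd ℂ) (χ g) * χ g = 1 := by
    intro g
    rw [mul_comm, Complex.mul_conj]
    norm_cast
    rw [Complex.normSq_eq_norm_sq]
    simp [hχabs g]
  constructor
  · ext i j
    rcases eq_or_ne i j with rfl | hij
    · simpa using h1 i
    · simp [Matrix.diagonal_apply_ne _ hij, Matrix.one_apply_ne hij]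
  · ext i j
    rcases eq_or_ne i j with rfl | hij
    · simpa [mul_comm] using h1 i
    · simp [Matrix.diagonal_apply_ne _ hij, Matrix.one_apply_ne hij]

lemma cov_entry (US : Matrix G G ℂ) (χ : G → ℂ)
    (hcov : ∀ g : G, rightReg g * US * (rightReg g)ᴴ = χ g • US)
    (g a b : G) : US (a * g) (b * g) = χ g * US a b := by
  have h := congrFun (congrFun (hcov g) a) b
  simp only [Matrix.mul_apply, Matrix.conjTranspose_apply, rightReg,
    Matrix.of_apply, Matrix.smul_apply, smul_eq_mul, eq_mul_inv_iff_mul_eq,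
    apply_ite (star : ℂ → ℂ), star_one, star_zero, ite_mul, mul_ite,
    one_mul, zero_mul, mul_one, mul_zero, Finset.sum_ite_eq,
    Finset.mem_univ, if_true] at h
  exact h

lemma permMul {n : Type*} [Fintype n] [DecidableEq n] (σ : n → n)
    (A B : Matrix n n ℂ) (hA : ∀ a c, A a c = if c = σ a then 1 else 0)
    (a c : n) : (A * B) a c = B (σ a) c := by
  simp [Matrix.mul_apply, hA, ite_mul, eq_comm]

lemma mulPermH {n : Type*} [Fintype n] [DecidableEq n] (σ : n → n)
    (A B : Matrix n n ℂ) (hA : ∀ a c, A a c = if c = σ a then 1 else 0)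
    (a c : n) : (B * Aᴴ) a c = B a (σ c) := by
  simp [Matrix.mul_apply, Matrix.conjTranspose_apply, hA,
    apply_ite (star : ℂ → ℂ), mul_ite, eq_comm]

def sigmaFC (a : G × G × (R → G)) : G × G × (R → G) :=
  (a.2.1, a.1, fun k => a.2.2 k * a.1)

lemma swap_apply (a c : G × G × (R → G)) :
    swap0i G R a c = if c = (a.2.1, a.1, a.2.2) then 1 else 0 := by
  rcases a with ⟨a0, ai, f⟩; rcases c with ⟨c0, ci, h⟩
  simp only [swap0i, Matrix.of_apply, Prod.mk.injEq]
  refine if_congr ?_ rfl rfl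
  constructor
  · rintro ⟨h1, h2, h3⟩; exact ⟨h2.symm, h1.symm, h3.symm⟩
  · rintro ⟨h1, h2, h3⟩; exact ⟨h2.symm, h1.symm, h3.symm⟩

lemma W_apply (a c : G × G × (R → G)) :
    Wmap G R a c = if c = (a.1, a.2.1, fun k => a.2.2 k * a.2.1) then 1 else 0 := by
  rcases a with ⟨a0, ai, f⟩; rcases c with ⟨c0, ci, h⟩
  simp only [Wmap, Matrix.sum_apply, tens3, Matrix.of_apply, ketbra, prodMat, rightReg,
    Matrix.one_apply]
  rw [Finset.sum_eq_single ai]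
  · rw [Finset.prod_boole]
    simp only [Prod.mk.injEq, Finset.mem_univ, true_implies, eq_mul_inv_iff_mul_eq,
      eq_self_iff_true, true_and, funext_iff]
    by_cases h1 : a0 = c0 <;> by_cases h2 : ci = ai <;> by_cases h3 : ∀ k : R, f k * ai = h k <;>
      simp [h1, h2, h3, eq_comm]
  · intro g _ hg
    simp [Ne.symm hg]
  · simp

lemma frameChange_apply (a c : G × G × (R → G)) :
    frameChange G R a c = if c = sigmaFC a then 1 else 0 := by
  have h := permMul (fun a : G × G × (R → G) => ((a.2.1, a.1, a.2.2) : G × G × (R → G)))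
    (swap0i G R) (Wmap G R) swap_apply a c
  rw [frameChange, h, W_apply]
  rfl

end AuxFC

/-- Covariant gates acquire only a control phase: if
`U_R(g) U_S U_R(g)† = χ(g) U_S` for a unimodular character `χ : G → ℂ`, then
`U_{0→i} (1 ⊗ U_S) U_{0→i}† = V_0(χ) ⊗ 1_i ⊗ (⊗_{k≠S} 1_k) ⊗ U_S`,
where `V_0(χ) = ∑_g χ(g) |g⟩⟨g|_0` is a diagonal unitary on the old-frame register. -/
theorem frameChange_covariant_control_phase
    (G : Type*) [Group G] [Fintype G] [DecidableEq G]
    (R : Type*) [Fintype R] [DecidableEq R]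
    (S : R) (US : Matrix G G ℂ)
    (hUS : USᴴ * US = 1 ∧ US * USᴴ = 1)
    (χ : G → ℂ)
    (hχ1 : χ 1 = 1)
    (hχmul : ∀ g h : G, χ (g * h) = χ g * χ h)
    (hχabs : ∀ g : G, ‖χ g‖ = 1)
    (hcov : ∀ g : G, rightReg g * US * (rightReg g)ᴴ = χ g • US) :
    frameChange G R * tens3 1 1 (embedAt S US) * (frameChange G R)ᴴ =
      tens3 (∑ g : G, χ g • ketbra g) 1 (embedAt S US) ∧
    (∑ g : G, χ g • ketbra g)ᴴ * (∑ g : G, χ g • ketbra g) = 1 ∧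
    (∑ g : G, χ g • ketbra g) * (∑ g : G, χ g • ketbra g)ᴴ = 1 := by
  refine ⟨?_, (Vunit χ hχabs).1, (Vunit χ hχabs).2⟩
  have hc := cov_entry US χ hcov
  ext ⟨a0, ai, f⟩ ⟨b0, bi, f'⟩
  rw [mulPermH sigmaFC (frameChange G R) _ frameChange_apply,
    permMul sigmaFC (frameChange G R) _ frameChange_apply, Vdiag]
  simp only [tens3, sigmaFC, Matrix.of_apply]
  by_cases hab : a0 = b0
  · subst hab
    have key : (embedAt S US (fun k => f k * a0) fun k => f' k * a0)
        = χ a0 * embedAt S US f f' := by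
      simp only [embedAt, prodMat, Matrix.of_apply]
      rw [← Finset.mul_prod_erase Finset.univ _ (Finset.mem_univ S),
        ← Finset.mul_prod_erase Finset.univ
          (fun k => (if k = S then US else 1) (f k) (f' k)) (Finset.mem_univ S)]
      rw [show (if S = S then US else (1 : Matrix G G ℂ)) = US from if_pos rfl]
      rw [hc]
      have hrest : ∏ k ∈ Finset.univ.erase S,
            (if k = S then US else (1 : Matrix G G ℂ)) (f k * a0) (f' k * a0)
          = ∏ k ∈ Finset.univ.erase S,
            (if k = S then US else (1 : Matrix G G ℂ)) (f k) (f' k) := by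
        refine Finset.prod_congr rfl fun k hk => ?_
        rw [if_neg (Finset.ne_of_mem_erase hk)]
        simp [Matrix.one_apply, mul_left_inj]
      rw [hrest]
      ring
    rw [key, Matrix.diagonal_apply_eq]
    simp only [Matrix.one_apply_eq]
    ring
  · simp [Matrix.one_apply_ne hab, Matrix.diagonal_apply_ne _ hab]
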